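/- Let L = L(α_1, …, α_m) be a p-adic lattice in a finite extension K of ℚ_p (m ≥ 2) such that |α_1|_p > |α_2|_p ≥ ⋯ ≥ |α_m|_p. Then the second successive value λ_2 := max{|v|_p : v ∈ L, |v|_p < λ_1}, where λ_1 = |α_1|_p, equals max(|p·α_1|_p, |α_2|_p). -/
import Mathlib


theorem stmt6 {p : ℕ} [Fact p.Prime] {K : Type*} [NormedField K]
    [Algebra ℚ_[p] K] [FiniteDimensional ℚ_[p] K] [IsUltrametricDist K]
    (hext : ∀ x : ℚ_[p], ‖algebraMap ℚ_[p] K x‖ = ‖x‖)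
    {m : ℕ} (hm : 2 ≤ m) (α : Fin m → K)
    (hindep : LinearIndependent ℚ_[p] α)
    (h01 : ‖α ⟨1, by omega⟩‖ < ‖α ⟨0, by omega⟩‖)
    (hsort : ∀ i j : Fin m, 1 ≤ (i : ℕ) → i ≤ j → ‖α j‖ ≤ ‖α i‖) :
    IsGreatest
      {r : ℝ | ∃ a : Fin m → ℤ_[p],
          ‖∑ i, ((a i : ℚ_[p])) • α i‖ = r ∧ r < ‖α ⟨0, by omega⟩‖}
      (max ‖(p : ℚ_[p]) • α ⟨0, by omega⟩‖ ‖α ⟨1, by omega⟩‖) := by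
  set e0 : Fin m := ⟨0, by omega⟩ with he0
  set e1 : Fin m := ⟨1, by omega⟩ with he1
  have hsmul : ∀ (c : ℚ_[p]) (x : K), ‖c • x‖ = ‖c‖ * ‖x‖ := by
    intro c x
    rw [Algebra.smul_def, norm_mul, hext]
  have hl1pos : 0 < ‖α e0‖ := lt_of_le_of_lt (norm_nonneg _) h01
  have hp1 : ‖(p : ℚ_[p])‖ < 1 := by
    rw [Padic.norm_p]
    have := (Fact.out : p.Prime).one_lt
    rw [inv_lt_one_iff₀]
    right
    exact_mod_cast this
  have hpα : ‖(p : ℚ_[p]) • α e0‖ < ‖α e0‖ := by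
    rw [hsmul]
    calc ‖(p : ℚ_[p])‖ * ‖α e0‖ < 1 * ‖α e0‖ := by
          exact mul_lt_mul_of_pos_right hp1 hl1pos
      _ = ‖α e0‖ := one_mul _
  constructor
  · -- membership
    rcases le_total ‖α e1‖ ‖(p : ℚ_[p]) • α e0‖ with h | h
    · refine ⟨fun i => if i = e0 then (p : ℤ_[p]) else 0, ?_, ?_⟩
      · rw [max_eq_left h]
        congr 1
        rw [Finset.sum_eq_single e0]
        · simp
        · intro b _ hb; simp [hb]
        · simp
      · rw [max_eq_left h]; exact hpα
    · refine ⟨fun i => if i = e1 then 1 else 0, ?_, ?_⟩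
      · rw [max_eq_right h]
        congr 1
        rw [Finset.sum_eq_single e1]
        · simp
        · intro b _ hb; simp [hb]
        · simp
      · rw [max_eq_right h]; exact h01
  · -- upper bound
    rintro r ⟨a, rfl, hlt⟩
    have hbound : ∀ i : Fin m, i ≠ e0 →
        ‖((a i : ℚ_[p])) • α i‖ ≤ ‖α e1‖ := by
      intro i hi
      have h1i : 1 ≤ (i : ℕ) := by
        rcases Nat.eq_zero_or_pos (i : ℕ) with h0 | h0
        · exact absurd (Fin.ext h0) hi
        · exact h0
      have : ‖α i‖ ≤ ‖α e1‖ := hsort e1 i le_rfl (by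
        rw [Fin.le_def]; exact h1i)
      rw [hsmul]
      calc ‖((a i : ℚ_[p]))‖ * ‖α i‖ ≤ 1 * ‖α e1‖ :=
            mul_le_mul (a i).norm_le_one this (norm_nonneg _) zero_le_one
        _ = ‖α e1‖ := one_mul _
    by_cases h0 : ‖a e0‖ < 1
    · -- a 0 divisible by p
      obtain ⟨w, hw⟩ := (PadicInt.norm_lt_one_iff_dvd _).mp h0
      apply IsUltrametricDist.norm_sum_le_of_forall_le_of_nonneg
      · exact le_max_of_le_right (norm_nonneg _)
      · intro i _
        by_cases hi : i = e0
        · subst hi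
          refine le_max_of_le_left ?_
          rw [hsmul, hsmul, PadicInt.padic_norm_e_of_padicInt, hw]
          have : ‖(p : ℤ_[p]) * w‖ ≤ ‖(p : ℤ_[p])‖ := by
            rw [norm_mul]
            calc ‖(p : ℤ_[p])‖ * ‖w‖ ≤ ‖(p : ℤ_[p])‖ * 1 :=
                  mul_le_mul_of_nonneg_left w.norm_le_one (norm_nonneg _)
              _ = _ := mul_one _
          have hpp : ‖(p : ℤ_[p])‖ = ‖(p : ℚ_[p])‖ := by
            rw [← PadicInt.padic_norm_e_of_padicInt]; push_cast; rfl
          exact mul_le_mul_of_nonneg_right (hpp ▸ this) (norm_nonneg _)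
        · exact le_max_of_le_right (hbound i hi)
    · -- a 0 is a unit: contradiction with hlt
      exfalso
      have h0' : ‖a e0‖ = 1 := le_antisymm (a e0).norm_le_one (not_lt.mp h0)
      have hterm : ‖((a e0 : ℚ_[p])) • α e0‖ = ‖α e0‖ := by
        rw [hsmul, PadicInt.padic_norm_e_of_padicInt, h0', one_mul]
      have hsplit : ((a e0 : ℚ_[p])) • α e0 +
          ∑ i ∈ Finset.univ.erase e0, ((a i : ℚ_[p])) • α i =
          ∑ i, ((a i : ℚ_[p])) • α i :=
        Finset.add_sum_erase Finset.univ (fun i => ((a i : ℚ_[p])) • α i) (Finset.mem_univ e0)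
      have hrest : ‖∑ i ∈ Finset.univ.erase e0, ((a i : ℚ_[p])) • α i‖ < ‖α e0‖ := by
        apply lt_of_le_of_lt _ h01
        apply IsUltrametricDist.norm_sum_le_of_forall_le_of_nonneg (norm_nonneg _)
        intro i hi
        exact hbound i (Finset.ne_of_mem_erase hi)
      have : ‖α e0‖ ≤ max ‖∑ i, ((a i : ℚ_[p])) • α i‖
          ‖∑ i ∈ Finset.univ.erase e0, ((a i : ℚ_[p])) • α i‖ := by
        calc ‖α e0‖ = ‖(∑ i, ((a i : ℚ_[p])) • α i) -
              ∑ i ∈ Finset.univ.erase e0, ((a i : ℚ_[p])) • α i‖ := by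
              rw [← hsplit]; simp [hterm.symm]
          _ ≤ _ := by
              rw [sub_eq_add_neg]
              exact (IsUltrametricDist.norm_add_le_max _ _).trans (le_of_eq (by rw [norm_neg]))
        
      rcases max_cases ‖∑ i, ((a i : ℚ_[p])) • α i‖
          ‖∑ i ∈ Finset.univ.erase e0, ((a i : ℚ_[p])) • α i‖ with ⟨hmax, _⟩ | ⟨hmax, _⟩ <;>
        rw [hmax] at this
      · exact absurd (lt_of_le_of_lt this hlt) (lt_irrefl _)
      · exact absurd (lt_of_le_of_lt this hrest) (lt_irrefl _)
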